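/- Let p be a prime. For a pair of vectors (c,d) ∈ ((ℤ/pℤ)^{16})², let D(c,d) = { [c_i : d_i] ∈ ℙ¹(𝔽_p) : 1 ≤ i ≤ 16, (c_i, d_i) ≠ (0,0) } be the set of projective directions of the nonzero columns. Then: (a) the number of pairs (c,d) with |D(c,d)| ≤ 1 equals p^{17} + p^{16} − p; and (b) the number of pairs (c,d) with |D(c,d)| = 2 equals (p(p+1)/2) · ((2p−1)^{16} − 2·p^{16} + 1). -/

import Mathlib

/-- The set of projective directions in `ℙ¹(𝔽_p)` of the nonzero columns of the
pair `(c, d)`. -/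
def directions (p : ℕ) [Fact p.Prime] (c d : Fin 16 → ZMod p) :
    Set (Projectivization (ZMod p) (ZMod p × ZMod p)) :=
  {x | ∃ i : Fin 16, ∃ h : ((c i, d i) : ZMod p × ZMod p) ≠ 0,
    x = Projectivization.mk (ZMod p) (c i, d i) h}

noncomputable section DirAux

open Finset
open scoped Classical

variable (p : ℕ) [Fact p.Prime]

local notation "V" => (ZMod p × ZMod p)
local notation "P" => Projectivization (ZMod p) (ZMod p × ZMod p)

instance : Finite P := Quotient.finite _
instance : Fintype P := Fintype.ofFinite _

/-- The fiber of `Projectivization.mk` over a point. -/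
def fiberF (x : P) : Finset V :=
  univ.filter (fun v => ∃ h : v ≠ 0, Projectivization.mk (ZMod p) v h = x)

lemma card_fiberF (x : P) : (fiberF p x).card = p - 1 := by
  have e : (ZMod p)ˣ ≃ {v : V // ∃ h : v ≠ 0, Projectivization.mk (ZMod p) v h = x} := by
    refine Equiv.ofBijective (fun u => ⟨u • x.rep, ?_, ?_⟩) ⟨?_, ?_⟩
    · simp [Units.smul_def, smul_eq_zero, x.rep_nonzero,
        (Units.ne_zero u : (u : ZMod p) ≠ 0)]
    · rw [show Projectivization.mk (ZMod p) (u • x.rep) _ =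
        Projectivization.mk (ZMod p) x.rep x.rep_nonzero from
        (Projectivization.mk_eq_mk_iff _ _ _ _ _).2 ⟨u, rfl⟩, Projectivization.mk_rep]
    · intro u w huw
      have h1 : (u : ZMod p) • x.rep = (w : ZMod p) • x.rep := by
        simpa [Units.smul_def] using congrArg Subtype.val huw
      exact Units.ext (smul_left_injective (ZMod p) x.rep_nonzero h1)
    · rintro ⟨v, hv, hmk⟩
      have : Projectivization.mk (ZMod p) v hv =
          Projectivization.mk (ZMod p) x.rep x.rep_nonzero := by
        rw [hmk, Projectivization.mk_rep]
      obtain ⟨a, ha⟩ := (Projectivization.mk_eq_mk_iff _ _ _ _ _).1 this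
      exact ⟨a, Subtype.ext ha⟩
  rw [fiberF, ← Fintype.card_subtype, ← Fintype.card_congr e, ZMod.card_units]

lemma fiberF_disjoint {x y : P} (hxy : x ≠ y) : Disjoint (fiberF p x) (fiberF p y) := by
  rw [Finset.disjoint_left]
  rintro v hx hy
  simp only [fiberF, mem_filter] at hx hy
  obtain ⟨-, h, rfl⟩ := hx
  obtain ⟨-, h', hy⟩ := hy
  exact hxy hy

lemma zero_not_mem_fiberF (x : P) : (0 : V) ∉ fiberF p x := by
  simp [fiberF]

lemma card_P : Fintype.card P = p + 1 := by
  have hp : 2 ≤ p := (Fact.out : p.Prime).two_le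
  have hpart : (univ : Finset V).erase 0 = univ.biUnion (fiberF p) := by
    ext v
    simp only [mem_erase, mem_univ, and_true, mem_biUnion, fiberF, mem_filter, true_and]
    constructor
    · intro hv
      exact ⟨Projectivization.mk (ZMod p) v hv, hv, rfl⟩
    · rintro ⟨x, hv, -⟩
      exact hv
  have hcard : p * p - 1 = Fintype.card P * (p - 1) := by
    have h1 : ((univ : Finset V).erase 0).card = p * p - 1 := by
      rw [card_erase_of_mem (mem_univ _), card_univ]
      simp [ZMod.card, sq]
    rw [← h1, hpart, card_biUnion (fun x _ y _ hxy => fiberF_disjoint p hxy)]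
    simp [card_fiberF, card_univ, mul_comm]
  have key : (Fintype.card P : ℤ) * ((p : ℤ) - 1) = ((p : ℤ) + 1) * ((p : ℤ) - 1) := by
    have := congrArg (fun n : ℕ => (n : ℤ)) hcard
    push_cast [Nat.cast_sub (by nlinarith : 1 ≤ p * p), Nat.cast_sub (by omega : 1 ≤ p)] at this
    linarith
  have hne : ((p : ℤ) - 1) ≠ 0 := by
    have : (2 : ℤ) ≤ (p : ℤ) := by exact_mod_cast hp
    omega
  have := mul_right_cancel₀ hne key
  exact_mod_cast this

/-- allowed column values for a given direction set. -/
def colSet (S : Finset P) : Finset V := insert 0 (S.biUnion (fiberF p))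

lemma mem_colSet {S : Finset P} {v : V} :
    v ∈ colSet p S ↔ v = 0 ∨ ∃ h : v ≠ 0, Projectivization.mk (ZMod p) v h ∈ S := by
  simp only [colSet, mem_insert, mem_biUnion, fiberF, mem_filter, mem_univ, true_and]
  constructor
  · rintro (rfl | ⟨x, hx, h, rfl⟩)
    · exact Or.inl rfl
    · exact Or.inr ⟨h, hx⟩
  · rintro (rfl | ⟨h, hS⟩)
    · exact Or.inl rfl
    · exact Or.inr ⟨_, hS, h, rfl⟩

lemma card_colSet (S : Finset P) : (colSet p S).card = 1 + S.card * (p - 1) := by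
  rw [colSet, card_insert_of_notMem, card_biUnion (fun x _ y _ hxy => fiberF_disjoint p hxy)]
  · simp only [card_fiberF, sum_const, smul_eq_mul]
    omega
  · simp only [mem_biUnion]
    rintro ⟨x, -, hx⟩
    exact zero_not_mem_fiberF p x hx

/-- the direction set as a Finset. -/
def dirF (cd : (Fin 16 → ZMod p) × (Fin 16 → ZMod p)) : Finset P :=
  (directions p cd.1 cd.2).toFinset

lemma dir_ncard (cd : (Fin 16 → ZMod p) × (Fin 16 → ZMod p)) :
    (directions p cd.1 cd.2).ncard = (dirF p cd).card :=
  Set.ncard_eq_toFinset_card' _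

lemma mem_dirF {cd : (Fin 16 → ZMod p) × (Fin 16 → ZMod p)} {x : P} :
    x ∈ dirF p cd ↔ ∃ i : Fin 16, ∃ h : ((cd.1 i, cd.2 i) : V) ≠ 0,
      x = Projectivization.mk (ZMod p) (cd.1 i, cd.2 i) h := by
  rw [dirF, Set.mem_toFinset]; rfl

lemma dirF_subset_iff {cd : (Fin 16 → ZMod p) × (Fin 16 → ZMod p)} {S : Finset P} :
    dirF p cd ⊆ S ↔ ∀ i : Fin 16, ((cd.1 i, cd.2 i) : V) ∈ colSet p S := by
  constructor
  · intro hsub i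
    rw [mem_colSet]
    by_cases h : ((cd.1 i, cd.2 i) : V) = 0
    · exact Or.inl h
    · exact Or.inr ⟨h, hsub (mem_dirF p |>.2 ⟨i, h, rfl⟩)⟩
  · intro hall x hx
    obtain ⟨i, h, rfl⟩ := (mem_dirF p).1 hx
    rcases (mem_colSet p).1 (hall i) with h0 | ⟨h', hS⟩
    · exact absurd h0 h
    · exact hS

/-- count of pairs whose direction set is contained in `S`. -/
lemma card_subset_count (S : Finset P) :
    (univ.filter (fun cd : (Fin 16 → ZMod p) × (Fin 16 → ZMod p) => dirF p cd ⊆ S)).card =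
      (1 + S.card * (p - 1)) ^ 16 := by
  have e : {cd : (Fin 16 → ZMod p) × (Fin 16 → ZMod p) //
      ∀ i : Fin 16, ((cd.1 i, cd.2 i) : V) ∈ colSet p S} ≃ (Fin 16 → (colSet p S : Finset V)) :=
    { toFun := fun cd i => ⟨(cd.1.1 i, cd.1.2 i), cd.2 i⟩
      invFun := fun g => ⟨(fun i => (g i).1.1, fun i => (g i).1.2), fun i => by
        simpa using (g i).2⟩
      left_inv := fun cd => rfl
      right_inv := fun g => by funext i; apply Subtype.ext; exact rfl }
  have h1 : (univ.filter (fun cd : (Fin 16 → ZMod p) × (Fin 16 → ZMod p) =>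
      dirF p cd ⊆ S)).card = (univ.filter (fun cd : (Fin 16 → ZMod p) × (Fin 16 → ZMod p) =>
      ∀ i : Fin 16, ((cd.1 i, cd.2 i) : V) ∈ colSet p S)).card := by
    congr 1
    apply filter_congr
    intro cd _
    simp [dirF_subset_iff]
  rw [h1, ← Fintype.card_subtype, Fintype.card_congr e]
  simp [card_colSet]

/-- count of pairs with direction set exactly `S`. -/
def cnt (S : Finset P) : ℕ :=
  (univ.filter (fun cd : (Fin 16 → ZMod p) × (Fin 16 → ZMod p) => dirF p cd = S)).card

lemma cnt_empty : cnt p ∅ = 1 := by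
  have := card_subset_count p ∅
  simp only [card_empty, zero_mul, add_zero, one_pow] at this
  rw [cnt, ← this]
  congr 1
  apply filter_congr
  intro cd _
  simp [Finset.subset_empty]

lemma cnt_singleton (x : P) : cnt p {x} + 1 = p ^ 16 := by
  have hp1 : 1 ≤ p := (Fact.out : p.Prime).one_lt.le
  have hsub := card_subset_count p {x}
  simp only [card_singleton, one_mul] at hsub
  have hsplit : (univ.filter (fun cd : (Fin 16 → ZMod p) × (Fin 16 → ZMod p) =>
      dirF p cd ⊆ {x})) =
      (univ.filter (fun cd => dirF p cd = ∅)) ∪ (univ.filter (fun cd => dirF p cd = {x})) := by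
    rw [← filter_or]
    apply filter_congr
    intro cd _
    simp [Finset.subset_singleton_iff]
  have hdisj : Disjoint (univ.filter (fun cd : (Fin 16 → ZMod p) × (Fin 16 → ZMod p) =>
      dirF p cd = ∅)) (univ.filter (fun cd => dirF p cd = {x})) := by
    rw [Finset.disjoint_left]
    rintro cd h1 h2
    simp only [mem_filter] at h1 h2
    rw [h1.2] at h2
    exact (singleton_ne_empty x) h2.2.symm
  rw [hsplit, card_union_of_disjoint hdisj] at hsub
  have h0 : (univ.filter (fun cd : (Fin 16 → ZMod p) × (Fin 16 → ZMod p) =>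
      dirF p cd = ∅)).card = 1 := cnt_empty p
  rw [h0] at hsub
  have : 1 + (p - 1) = p := by omega
  rw [this] at hsub
  rw [cnt]
  omega

lemma cnt_pair {x y : P} (hxy : x ≠ y) :
    cnt p {x, y} + 2 * p ^ 16 = (1 + 2 * (p - 1)) ^ 16 + 1 := by
  have hsub := card_subset_count p {x, y}
  rw [card_pair hxy] at hsub
  have hsplit : (univ.filter (fun cd : (Fin 16 → ZMod p) × (Fin 16 → ZMod p) =>
      dirF p cd ⊆ {x, y})) =
      ((univ.filter (fun cd => dirF p cd = ∅)) ∪ (univ.filter (fun cd => dirF p cd = {x}))) ∪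
      ((univ.filter (fun cd => dirF p cd = {y})) ∪ (univ.filter (fun cd => dirF p cd = {x, y}))) := by
    rw [← filter_or, ← filter_or, ← filter_or]
    apply filter_congr
    intro cd _
    constructor
    · intro hss
      by_cases hx : x ∈ dirF p cd <;> by_cases hy : y ∈ dirF p cd
      · right; right
        apply Finset.Subset.antisymm hss
        intro z hz
        simp only [mem_insert, mem_singleton] at hz
        rcases hz with rfl | rfl <;> assumption
      · left; right
        apply Finset.Subset.antisymm
        · intro z hz
          rcases mem_insert.1 (hss hz) with rfl | hz'
          · exact mem_singleton_self z
          · rw [mem_singleton.1 hz'] at hz; exact absurd hz hy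
        · simpa using hx
      · right; left
        apply Finset.Subset.antisymm
        · intro z hz
          rcases mem_insert.1 (hss hz) with rfl | hz'
          · exact absurd hz hx
          · exact hz'
        · simpa using hy
      · left; left
        rw [Finset.eq_empty_iff_forall_notMem]
        intro z hz
        rcases mem_insert.1 (hss hz) with rfl | hz'
        · exact hx hz
        · rw [mem_singleton.1 hz'] at hz; exact hy hz
    · rintro ((h | h) | (h | h)) <;> rw [h]
      · exact empty_subset _
      · intro z hz; rw [mem_singleton.1 hz]; exact mem_insert_self x {y}
      · intro z hz; rw [mem_singleton.1 hz]; exact mem_insert_of_mem (mem_singleton_self y)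
  have d1 : Disjoint (univ.filter (fun cd : (Fin 16 → ZMod p) × (Fin 16 → ZMod p) =>
      dirF p cd = ∅)) (univ.filter (fun cd => dirF p cd = {x})) := by
    rw [Finset.disjoint_left]; rintro cd h1 h2
    simp only [mem_filter] at h1 h2
    rw [h1.2] at h2; exact (singleton_ne_empty x) h2.2.symm
  have d2 : Disjoint (univ.filter (fun cd : (Fin 16 → ZMod p) × (Fin 16 → ZMod p) =>
      dirF p cd = {y})) (univ.filter (fun cd => dirF p cd = {x, y})) := by
    rw [Finset.disjoint_left]; rintro cd h1 h2
    simp only [mem_filter] at h1 h2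
    rw [h1.2] at h2
    have : x ∈ ({y} : Finset P) := h2.2 ▸ mem_insert_self x {y}
    exact hxy (mem_singleton.1 this)
  have d3 : Disjoint ((univ.filter (fun cd : (Fin 16 → ZMod p) × (Fin 16 → ZMod p) =>
      dirF p cd = ∅)) ∪ (univ.filter (fun cd => dirF p cd = {x})))
      ((univ.filter (fun cd => dirF p cd = {y})) ∪ (univ.filter (fun cd => dirF p cd = {x, y}))) := by
    rw [Finset.disjoint_left]
    rintro cd h1 h2
    simp only [mem_union, mem_filter] at h1 h2
    rcases h1 with ⟨-, h1⟩ | ⟨-, h1⟩ <;> rcases h2 with ⟨-, h2⟩ | ⟨-, h2⟩ <;> rw [h1] at h2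
    · exact (singleton_ne_empty y) h2.symm
    · exact (insert_ne_empty x {y}) h2.symm
    · exact hxy (mem_singleton.1 (h2 ▸ mem_singleton_self x))
    · have hyx : y ∈ ({x} : Finset P) := by
        rw [h2]; exact mem_insert_of_mem (mem_singleton_self y)
      exact hxy (mem_singleton.1 hyx).symm
  rw [hsplit, card_union_of_disjoint d3, card_union_of_disjoint d1, card_union_of_disjoint d2]
    at hsub
  have h0 : (univ.filter (fun cd : (Fin 16 → ZMod p) × (Fin 16 → ZMod p) =>
      dirF p cd = ∅)).card = 1 := cnt_empty p
  have h1 := cnt_singleton p x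
  have h2 := cnt_singleton p y
  rw [cnt] at h1 h2 ⊢
  omega

end DirAux

/-- Exact counts of pairs `(c, d)` whose columns determine at most one
direction, resp. exactly two directions, in `ℙ¹(𝔽_p)`. -/
theorem direction_counts (p : ℕ) [Fact p.Prime] :
    ((Nat.card {cd : (Fin 16 → ZMod p) × (Fin 16 → ZMod p) //
        (directions p cd.1 cd.2).ncard ≤ 1} : ℤ) =
      (p : ℤ) ^ 17 + (p : ℤ) ^ 16 - (p : ℤ)) ∧
    ((Nat.card {cd : (Fin 16 → ZMod p) × (Fin 16 → ZMod p) //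
        (directions p cd.1 cd.2).ncard = 2} : ℤ) =
      ((p : ℤ) * ((p : ℤ) + 1) / 2) *
        ((2 * (p : ℤ) - 1) ^ 16 - 2 * (p : ℤ) ^ 16 + 1)) := by
  classical
  have hp1 : 1 ≤ p := (Fact.out : p.Prime).one_lt.le
  have key : ∀ Q : ℕ → Prop, ∀ _ : DecidablePred Q,
      Nat.card {cd : (Fin 16 → ZMod p) × (Fin 16 → ZMod p) //
        Q (directions p cd.1 cd.2).ncard} =
      ∑ S ∈ (Finset.univ.filter (fun S : Finset
          (Projectivization (ZMod p) (ZMod p × ZMod p)) => Q S.card)), cnt p S := by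
    intro Q _
    rw [Nat.card_eq_fintype_card, Fintype.card_subtype]
    have h1 : (Finset.univ.filter (fun cd : (Fin 16 → ZMod p) × (Fin 16 → ZMod p) =>
        Q (directions p cd.1 cd.2).ncard)) =
        (Finset.univ.filter (fun cd => Q (dirF p cd).card)) := by
      apply Finset.filter_congr
      intro cd _
      rw [dir_ncard]
    rw [h1]
    rw [Finset.card_eq_sum_card_fiberwise (f := dirF p)
      (t := Finset.univ.filter (fun S => Q S.card))
      (fun cd hcd => by
        simp only [Finset.mem_coe, Finset.mem_filter, Finset.mem_univ, true_and] at hcd ⊢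
        exact hcd)]
    apply Finset.sum_congr rfl
    intro S hS
    simp only [Finset.mem_filter, Finset.mem_univ, true_and] at hS
    rw [cnt]
    congr 1
    rw [Finset.filter_filter]
    apply Finset.filter_congr
    intro cd _
    constructor
    · exact fun h => h.2
    · exact fun h => ⟨h ▸ hS, h⟩
  constructor
  · have kA := key (fun n => n ≤ 1) inferInstance
    beta_reduce at kA
    rw [kA]
    have hsplit : (Finset.univ.filter (fun S : Finset
        (Projectivization (ZMod p) (ZMod p × ZMod p)) => S.card ≤ 1)) =
        (Finset.univ.filter (fun S => S.card = 0)) ∪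
        (Finset.univ.filter (fun S => S.card = 1)) := by
      rw [← Finset.filter_or]
      apply Finset.filter_congr
      intro S _
      constructor
      · intro h; omega
      · intro h; omega
    have hdisj : Disjoint (Finset.univ.filter (fun S : Finset
        (Projectivization (ZMod p) (ZMod p × ZMod p)) => S.card = 0))
        (Finset.univ.filter (fun S => S.card = 1)) := by
      rw [Finset.disjoint_left]
      rintro S h1 h2
      simp only [Finset.mem_filter] at h1 h2
      omega
    rw [hsplit, Finset.sum_union hdisj]
    have h0 : (Finset.univ.filter (fun S : Finset
        (Projectivization (ZMod p) (ZMod p × ZMod p)) => S.card = 0)) = {∅} := by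
      ext S
      simp [Finset.card_eq_zero]
    have h1 : (Finset.univ.filter (fun S : Finset
        (Projectivization (ZMod p) (ZMod p × ZMod p)) => S.card = 1)) =
        Finset.univ.image (fun x : Projectivization (ZMod p) (ZMod p × ZMod p) => {x}) := by
      ext S
      simp only [Finset.mem_filter, Finset.mem_univ, true_and, Finset.mem_image,
        Finset.card_eq_one]
      constructor
      · rintro ⟨x, rfl⟩; exact ⟨x, rfl⟩
      · rintro ⟨x, rfl⟩; exact ⟨x, rfl⟩
    rw [h0, h1, Finset.sum_singleton, cnt_empty,
      Finset.sum_image (fun x _ y _ h => Finset.singleton_injective h)]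
    have hsing : ∀ x : Projectivization (ZMod p) (ZMod p × ZMod p),
        cnt p {x} = p ^ 16 - 1 := by
      intro x
      have := cnt_singleton p x
      omega
    rw [Finset.sum_congr rfl (fun x _ => hsing x), Finset.sum_const, Finset.card_univ, card_P]
    have hpow : 1 ≤ p ^ 16 := Nat.one_le_pow _ _ (by omega)
    rw [smul_eq_mul]
    push_cast [Nat.cast_sub hpow]
    ring
  · have kB := key (fun n => n = 2) inferInstance
    beta_reduce at kB
    rw [kB]
    have h2 : (Finset.univ.filter (fun S : Finset
        (Projectivization (ZMod p) (ZMod p × ZMod p)) => S.card = 2)) =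
        Finset.powersetCard 2 Finset.univ := by
      rw [Finset.powersetCard_eq_filter, Finset.powerset_univ]
    have hval : ∀ S ∈ Finset.univ.filter (fun S : Finset
        (Projectivization (ZMod p) (ZMod p × ZMod p)) => S.card = 2),
        (cnt p S : ℤ) = (2 * (p : ℤ) - 1) ^ 16 + 1 - 2 * (p : ℤ) ^ 16 := by
      intro S hS
      simp only [Finset.mem_filter, Finset.mem_univ, true_and] at hS
      obtain ⟨x, y, hxy, rfl⟩ := Finset.card_eq_two.1 hS
      have := cnt_pair p hxy
      have hcast := congrArg (fun n : ℕ => (n : ℤ)) this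
      push_cast [Nat.cast_sub hp1] at hcast
      have hx : (1 : ℤ) + 2 * ((p : ℤ) - 1) = 2 * (p : ℤ) - 1 := by ring
      rw [hx] at hcast
      linarith
    have hNcard : (Finset.univ.filter (fun S : Finset
        (Projectivization (ZMod p) (ZMod p × ZMod p)) => S.card = 2)).card =
        (p + 1).choose 2 := by
      rw [h2, Finset.card_powersetCard, Finset.card_univ, card_P]
    push_cast
    rw [Finset.sum_congr rfl hval, Finset.sum_const, hNcard]
    have hchoose : 2 * ((p + 1).choose 2) = p * (p + 1) := by
      rw [Nat.choose_two_right, Nat.add_sub_cancel,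
        Nat.mul_div_cancel' (by rw [mul_comm]; exact (Nat.even_mul_succ_self p).two_dvd)]
      ring
    have h2' : (2 : ℤ) * (((p + 1).choose 2 : ℕ) : ℤ) = (p : ℤ) * ((p : ℤ) + 1) := by
      exact_mod_cast hchoose
    have hc : (((p + 1).choose 2 : ℕ) : ℤ) = (p : ℤ) * ((p : ℤ) + 1) / 2 := by
      rw [← h2', Int.mul_ediv_cancel_left _ two_ne_zero]
    rw [nsmul_eq_mul, hc]
    ring
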